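/- arXiv:1710.10382 — 7 statements merged into one kernel-verified Lean document; each statement's English description precedes it below -/
import Mathlib

section
/- Consider n data points x_i = (1, z_i)ᵀ ∈ ℝ^{p+1} with z_i ∈ ℝ^p, and a 0-1 vector δ ∈ {0,1}ⁿ with ∑δ_i = k. Then det(∑ᵢ δᵢ xᵢ xᵢᵀ) ≤ (k^{p+1}/4^p) ∏_{j=1}^p (z_{(n)j} - z_{(1)j})², where z_{(n)j} = max_i z_{ij} and z_{(1)j} = min_i z_{ij}. -/
open Finset Matrix

private lemma vecMulVec_mulVec' {m : Type*} [Fintype m] (v x : m → ℝ) :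
    Matrix.vecMulVec v v *ᵥ x = (v ⬝ᵥ x) • v := by
  funext i
  simp only [Matrix.mulVec, dotProduct, Matrix.vecMulVec_apply, Pi.smul_apply,
    smul_eq_mul]
  rw [Finset.sum_mul]
  exact Finset.sum_congr rfl fun j _ => by ring

private lemma psd_sum_vecMulVec {ι m : Type*} [Fintype ι] [DecidableEq ι] [Fintype m]
    (δ : ι → ℝ) (hδ : ∀ i, 0 ≤ δ i) (y : ι → m → ℝ) :
    (∑ i, δ i • Matrix.vecMulVec (y i) (y i)).PosSemidef := by
  rw [Matrix.posSemidef_iff_dotProduct_mulVec]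
  constructor
  · ext a b
    simp only [Matrix.conjTranspose_apply, Matrix.sum_apply, Matrix.smul_apply,
      Matrix.vecMulVec_apply, smul_eq_mul, star_trivial]
    exact Finset.sum_congr rfl fun i _ => by ring
  · intro x
    have hmv : (∑ i, δ i • Matrix.vecMulVec (y i) (y i)) *ᵥ x
        = ∑ i, δ i • ((y i ⬝ᵥ x) • y i) := by
      rw [show (∑ i, δ i • Matrix.vecMulVec (y i) (y i)) *ᵥ x
          = ∑ i, (δ i • Matrix.vecMulVec (y i) (y i)) *ᵥ x from by
        induction (Finset.univ : Finset ι) using Finset.induction with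
        | empty => simp [Matrix.zero_mulVec]
        | insert _ _ h ih => simp only [Finset.sum_insert h, Matrix.add_mulVec, ih]]
      exact Finset.sum_congr rfl fun i _ => by
        rw [Matrix.smul_mulVec, vecMulVec_mulVec']
    have hds : x ⬝ᵥ (∑ i, δ i • ((y i ⬝ᵥ x) • y i)) = ∑ i, x ⬝ᵥ (δ i • ((y i ⬝ᵥ x) • y i)) := by
      simp only [dotProduct, Finset.sum_apply, Finset.mul_sum]
      exact Finset.sum_comm
    rw [hmv, star_trivial, hds]
    refine Finset.sum_nonneg fun i _ => ?_
    rw [dotProduct_smul, dotProduct_smul, smul_eq_mul, smul_eq_mul,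
      dotProduct_comm]
    exact mul_nonneg (hδ i) (mul_self_nonneg _)

private lemma trace_eq_sum_eigenvalues {m : ℕ} {M : Matrix (Fin m) (Fin m) ℝ}
    (hM : M.IsHermitian) : M.trace = ∑ i, hM.eigenvalues i := by
  simpa using hM.trace_eq_sum_eigenvalues

private lemma det_le_pow_of_psd {m : ℕ} (hm : m ≠ 0) {M : Matrix (Fin m) (Fin m) ℝ}
    (hM : M.PosSemidef) {c : ℝ} (hc : 0 ≤ c) (hd : ∀ i, M i i ≤ c) :
    M.det ≤ c ^ m := by
  have hH := hM.1
  have hev : ∀ i, 0 ≤ hH.eigenvalues i := fun i => hM.eigenvalues_nonneg i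
  have htr : ∑ i, hH.eigenvalues i ≤ m * c := by
    rw [← trace_eq_sum_eigenvalues hH, Matrix.trace]
    calc ∑ i, M.diag i ≤ ∑ _i : Fin m, c := Finset.sum_le_sum fun i _ => hd i
    _ = m * c := by simp [mul_comm]
  have hmpos : (0:ℝ) < m := by
    have := Nat.pos_of_ne_zero hm
    exact_mod_cast this
  have hgm := Real.geom_mean_le_arith_mean_weighted Finset.univ
      (fun _ => (m:ℝ)⁻¹) hH.eigenvalues (fun i _ => by positivity)
      (by simp [Finset.card_univ]; field_simp) (fun i _ => hev i)
  have h1 : ∑ i, (m:ℝ)⁻¹ * hH.eigenvalues i ≤ c := by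
    rw [← Finset.mul_sum]
    calc (m:ℝ)⁻¹ * ∑ i, hH.eigenvalues i ≤ (m:ℝ)⁻¹ * (m * c) :=
          mul_le_mul_of_nonneg_left htr (by positivity)
    _ = c := by field_simp
  have hgm' : ∏ i, hH.eigenvalues i ^ ((m:ℝ)⁻¹) ≤ c := le_trans hgm h1
  have hprod : M.det = ∏ i, hH.eigenvalues i := by
    rw [hH.det_eq_prod_eigenvalues]; simp
  rw [hprod]
  calc ∏ i, hH.eigenvalues i = (∏ i, hH.eigenvalues i ^ ((m:ℝ)⁻¹)) ^ m := by
        rw [← Finset.prod_pow]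
        refine Finset.prod_congr rfl fun i _ => ?_
        rw [← Real.rpow_natCast (hH.eigenvalues i ^ ((m:ℝ)⁻¹)) m,
          ← Real.rpow_mul (hev i), inv_mul_cancel₀ (ne_of_gt hmpos), Real.rpow_one]
  _ ≤ c ^ m := pow_le_pow_left₀
        (Finset.prod_nonneg fun i _ => Real.rpow_nonneg (hev i) _) hgm' m

private lemma aux_main {n p : ℕ} [NeZero n] (z : Fin n → Fin p → ℝ)
    (δ : Fin n → ℝ) (hδ : ∀ i, δ i = 0 ∨ δ i = 1) (k : ℕ)
    (hk : ∑ i, δ i = k) (Mx mn : Fin p → ℝ)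
    (hle : ∀ i j, z i j ≤ Mx j) (hge : ∀ i j, mn j ≤ z i j) :
    (∑ i, δ i • Matrix.vecMulVec (Fin.cons 1 (z i) : Fin (p + 1) → ℝ)
        (Fin.cons 1 (z i))).det ≤
      ((k : ℝ) ^ (p + 1) / 4 ^ p) * ∏ j, (Mx j - mn j) ^ 2 := by
  classical
  have hδ0 : ∀ i, 0 ≤ δ i := fun i => (hδ i).elim (fun h => h.ge) (fun h => h ▸ zero_le_one)
  set M := ∑ i, δ i • Matrix.vecMulVec (Fin.cons 1 (z i) : Fin (p + 1) → ℝ)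
      (Fin.cons 1 (z i)) with hMdef
  by_cases hdeg : ∃ j, Mx j = mn j
  · obtain ⟨j, hj⟩ := hdeg
    have hz : ∀ i, z i j = Mx j := fun i => le_antisymm (hle i j) (hj ▸ hge i j)
    set v : Fin (p+1) → ℝ := Pi.single j.succ 1 + Pi.single 0 (-(Mx j)) with hv
    have hvne : v ≠ 0 := by
      intro h
      have := congrFun h j.succ
      simp [hv, Pi.single_eq_same, Pi.single_eq_of_ne (Fin.succ_ne_zero j)] at this
    have hdot : ∀ i, (Fin.cons 1 (z i) : Fin (p+1) → ℝ) ⬝ᵥ v = 0 := by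
      intro i
      rw [hv, dotProduct_add, dotProduct_single, dotProduct_single]
      simp [hz i]
    have hMv : M *ᵥ v = 0 := by
      funext a
      simp only [Matrix.mulVec, dotProduct, hMdef, Matrix.sum_apply, Matrix.smul_apply,
        Matrix.vecMulVec_apply, smul_eq_mul, Pi.zero_apply, Finset.sum_mul]
      rw [Finset.sum_comm]
      refine Finset.sum_eq_zero fun i _ => ?_
      have hd0 := hdot i
      simp only [dotProduct] at hd0
      calc ∑ b, δ i * ((Fin.cons 1 (z i) : Fin (p+1) → ℝ) a *
              (Fin.cons 1 (z i) : Fin (p+1) → ℝ) b) * v b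
          = δ i * (Fin.cons 1 (z i) : Fin (p+1) → ℝ) a *
              ∑ b, (Fin.cons 1 (z i) : Fin (p+1) → ℝ) b * v b := by
            rw [Finset.mul_sum]; exact Finset.sum_congr rfl fun b _ => by ring
      _ = 0 := by rw [hd0, mul_zero]
    have hdet : M.det = 0 := Matrix.exists_mulVec_eq_zero_iff.mp ⟨v, hvne, hMv⟩
    rw [hdet]
    positivity
  · push_neg at hdeg
    have i0 : Fin n := ⟨0, Nat.pos_of_ne_zero (NeZero.ne n)⟩
    have hr : ∀ j, 0 < Mx j - mn j := fun j =>
      sub_pos.mpr (((hge i0 j).trans (hle i0 j)).lt_of_ne' (hdeg j))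
    set w : Fin n → Fin p → ℝ := fun i j => (2 * z i j - (Mx j + mn j)) / (Mx j - mn j) with hw
    have hw1 : ∀ i j, w i j * w i j ≤ 1 := by
      intro i j
      have h1 : w i j ≤ 1 := by
        rw [hw, div_le_one (hr j)]; linarith [hle i j, hge i j]
      have h2 : -1 ≤ w i j := by
        rw [hw, le_div_iff₀ (hr j)]; linarith [hle i j, hge i j]
      nlinarith
    set d : Fin p → ℝ := fun j => 2 / (Mx j - mn j) with hd
    set A : Matrix (Fin (p+1)) (Fin (p+1)) ℝ :=
      Matrix.of fun a b =>
        Fin.cases (Fin.cases 1 (fun _ => 0) b)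
          (fun j => Fin.cases (-(Mx j + mn j) / (Mx j - mn j))
            (fun j' => if j' = j then d j else 0) b) a with hA
    have hAx : ∀ i, A *ᵥ (Fin.cons 1 (z i) : Fin (p+1) → ℝ) = Fin.cons 1 (w i) := by
      intro i
      funext a
      induction a using Fin.cases with
      | zero =>
        simp only [Matrix.mulVec, dotProduct, hA, Matrix.of_apply, Fin.cases_zero]
        rw [Fin.sum_univ_succ]
        simp
      | succ j =>
        simp only [Matrix.mulVec, dotProduct, hA, Matrix.of_apply, Fin.cases_succ]
        rw [Fin.sum_univ_succ]
        simp only [Fin.cases_zero, Fin.cases_succ, Fin.cons_zero, Fin.cons_succ, mul_one]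
        rw [Finset.sum_congr rfl (fun j' _ => by
          rw [show (if j' = j then d j else 0) * z i j' = if j' = j then d j * z i j' else 0
            from by split <;> simp])]
      
        rw [Finset.sum_ite_eq' Finset.univ j (fun j' => d j * z i j')]
        simp only [Finset.mem_univ, if_true]
        rw [hd, hw]
        field_simp
        ring
    have hAtri : A.BlockTriangular OrderDual.toDual := by
      intro a b hab
      have hba : (a : Fin (p+1)) < b := hab
      obtain rfl | ⟨i, rfl⟩ := Fin.eq_zero_or_eq_succ a
      · obtain rfl | ⟨j, rfl⟩ := Fin.eq_zero_or_eq_succ b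
        · exact absurd hba (lt_irrefl _)
        · simp only [hA, Matrix.of_apply, Fin.cases_zero, Fin.cases_succ]
      · obtain rfl | ⟨j, rfl⟩ := Fin.eq_zero_or_eq_succ b
        · exact absurd hba (Fin.not_lt.mpr (Fin.zero_le _))
        · have hij : i < j := by rwa [Fin.succ_lt_succ_iff] at hba
          simp only [hA, Matrix.of_apply, Fin.cases_succ]
          rw [if_neg (fun h => absurd hij (by subst h; exact lt_irrefl _))]
    have hdetA : A.det = ∏ j, d j := by
      rw [Matrix.det_of_lowerTriangular A hAtri, Fin.prod_univ_succ]
      simp [hA]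
    set M' := ∑ i, δ i • Matrix.vecMulVec (Fin.cons 1 (w i) : Fin (p+1) → ℝ)
        (Fin.cons 1 (w i)) with hM'def
    have key : ∀ u : Fin (p+1) → ℝ,
        Matrix.vecMulVec (A *ᵥ u) (A *ᵥ u) = A * Matrix.vecMulVec u u * Aᵀ := by
      intro u
      rw [Matrix.vecMulVec_eq (Fin 1), Matrix.vecMulVec_eq (Fin 1), Matrix.replicateCol_mulVec,
        ← Matrix.vecMul_transpose, Matrix.replicateRow_vecMul, Matrix.mul_assoc, Matrix.mul_assoc,
        Matrix.mul_assoc]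
    have hM' : M' = A * M * Aᵀ := by
      rw [hM'def, hMdef, Matrix.mul_sum, Finset.sum_mul]
      refine Finset.sum_congr rfl fun i _ => ?_
      rw [mul_smul_comm, smul_mul_assoc, ← key, hAx i]
    have hdetM' : M'.det = A.det ^ 2 * M.det := by
      rw [hM', Matrix.det_mul, Matrix.det_mul, Matrix.det_transpose]; ring
    have hPSD : M'.PosSemidef := psd_sum_vecMulVec δ hδ0 _
    have hdiag : ∀ a, M' a a ≤ (k:ℝ) := by
      intro a
      have he : M' a a = ∑ i, δ i * ((Fin.cons 1 (w i) : Fin (p+1) → ℝ) a *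
          (Fin.cons 1 (w i) : Fin (p+1) → ℝ) a) := by
        simp [hM'def, Matrix.sum_apply, Matrix.vecMulVec_apply]
      rw [he, ← hk]
      refine Finset.sum_le_sum fun i _ => ?_
      induction a using Fin.cases with
      | zero => simp
      | succ j =>
        simp only [Fin.cons_succ]
        calc δ i * (w i j * w i j) ≤ δ i * 1 :=
              mul_le_mul_of_nonneg_left (hw1 i j) (hδ0 i)
        _ = δ i := mul_one _
    have hdetM'le : M'.det ≤ (k:ℝ) ^ (p+1) :=
      det_le_pow_of_psd (Nat.succ_ne_zero p) hPSD (Nat.cast_nonneg k) hdiag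
    have hone : A.det ^ 2 * ∏ j, ((Mx j - mn j)/2)^2 = 1 := by
      rw [hdetA, ← Finset.prod_pow, ← Finset.prod_mul_distrib]
      rw [Finset.prod_congr rfl (fun j _ => show d j ^ 2 * ((Mx j - mn j)/2)^2 = 1 from by
        rw [← mul_pow, hd]
        field_simp
        exact div_self (ne_of_gt (hr j)))]
      exact Finset.prod_const_one
    have hMeq : M.det = M'.det * ∏ j, ((Mx j - mn j)/2)^2 := by
      rw [hdetM', mul_right_comm, hone, one_mul]
    have hPnn : (0:ℝ) ≤ ∏ j, ((Mx j - mn j)/2)^2 :=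
      Finset.prod_nonneg fun j _ => sq_nonneg _
    calc M.det = M'.det * ∏ j, ((Mx j - mn j)/2)^2 := hMeq
    _ ≤ (k:ℝ)^(p+1) * ∏ j, ((Mx j - mn j)/2)^2 := mul_le_mul_of_nonneg_right hdetM'le hPnn
    _ = ((k : ℝ) ^ (p + 1) / 4 ^ p) * ∏ j, (Mx j - mn j) ^ 2 := by
        rw [Finset.prod_congr rfl fun j _ => div_pow (Mx j - mn j) 2 2,
          Finset.prod_div_distrib, Finset.prod_const]
        simp only [Finset.card_univ, Fintype.card_fin]
        norm_num
        ring

/-- D-optimality upper bound: for data points `xᵢ = (1, zᵢ)` and a 0-1 vector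
`δ` with `∑ δᵢ = k`,
`det (∑ δᵢ xᵢ xᵢᵀ) ≤ (k^(p+1)/4^p) ∏ⱼ (maxᵢ z_{ij} - minᵢ z_{ij})²`. -/
theorem stmt_3 {n p : ℕ} [NeZero n] (z : Fin n → Fin p → ℝ)
    (δ : Fin n → ℝ) (hδ : ∀ i, δ i = 0 ∨ δ i = 1) (k : ℕ)
    (hk : ∑ i, δ i = k) :
    (∑ i, δ i • Matrix.vecMulVec (Fin.cons 1 (z i) : Fin (p + 1) → ℝ)
        (Fin.cons 1 (z i))).det ≤
      ((k : ℝ) ^ (p + 1) / 4 ^ p) *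
        ∏ j, ((Finset.univ.sup' Finset.univ_nonempty fun i => z i j) -
          (Finset.univ.inf' Finset.univ_nonempty fun i => z i j)) ^ 2 := by
  exact aux_main z δ hδ k hk
    (fun j => Finset.univ.sup' Finset.univ_nonempty fun i => z i j)
    (fun j => Finset.univ.inf' Finset.univ_nonempty fun i => z i j)
    (fun i j => Finset.le_sup' (fun i => z i j) (Finset.mem_univ i))
    (fun i j => Finset.inf'_le (fun i => z i j) (Finset.mem_univ i))
end

section
/- Suppose p ≥ 1 and the subdata consists of all 2^p points of the form (a₁,...,a_p) with each a_j ∈ {z_{(1)j}, z_{(n)j}}, each point included k/2^p times (where 2^p divides k). Then with x = (1, z)ᵀ for each such point, det(∑ x xᵀ over the subdata with multiplicity) = (k^{p+1}/4^p) ∏_{j=1}^p (z_{(n)j} - z_{(1)j})². -/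
open Matrix Finset

/-- Sum over all sign vectors of a function that flips sign on flipping coordinate `j`. -/
lemma flip_sum {p : ℕ} (j : Fin p) (F : (Fin p → Bool) → ℝ)
    (hF : ∀ s, F (Function.update s j (!(s j))) = -F s) :
    ∑ s : Fin p → Bool, F s = 0 := by
  classical
  apply Finset.sum_ninvolution (fun s => Function.update s j (!(s j)))
  · intro s; rw [hF]; ring
  · intro s hs hgs
    apply hs
    have h := hF s
    rw [hgs] at h
    linarith
  · intro s; exact Finset.mem_univ _
  · intro s
    funext i
    rcases eq_or_ne i j with rfl | h
    · simp
    · simp [Function.update_of_ne h]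

/-- Attainment of the D-optimality bound: the full factorial design on the
corners of the box `∏ [z_{(1)j}, z_{(n)j}]`, with each of the `2^p` corner
points replicated `k/2^p` times, achieves
`det (∑ x xᵀ) = (k^(p+1)/4^p) ∏ⱼ (z_{(n)j} - z_{(1)j})²`. -/
theorem stmt_4 (p : ℕ) (hp : 1 ≤ p) (zmin zmax : Fin p → ℝ)
    (hz : ∀ j, zmin j < zmax j) (k : ℕ) (hk : 2 ^ p ∣ k) :
    (∑ s : Fin p → Bool, ((k / 2 ^ p : ℕ) : ℝ) •
        Matrix.vecMulVec
          (Fin.cons 1 (fun j => if s j then zmax j else zmin j) : Fin (p + 1) → ℝ)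
          (Fin.cons 1 (fun j => if s j then zmax j else zmin j))).det =
      ((k : ℝ) ^ (p + 1) / 4 ^ p) * ∏ j, (zmax j - zmin j) ^ 2 := by
  classical
  set m : Fin p → ℝ := fun j => (zmax j + zmin j) / 2 with hm
  set r : Fin p → ℝ := fun j => (zmax j - zmin j) / 2 with hr
  set u : (Fin p → Bool) → Fin (p + 1) → ℝ :=
    fun s => Fin.cons 1 (fun j => if s j then 1 else -1) with hu
  set L : Matrix (Fin (p + 1)) (Fin (p + 1)) ℝ :=
    Matrix.of (Fin.cons (Fin.cons 1 0)
      (fun i => Fin.cons (m i) (fun j => if i = j then r i else 0))) with hL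
  -- the corner points factor through L
  have hx : ∀ s : Fin p → Bool,
      (Fin.cons 1 (fun j => if s j then zmax j else zmin j) : Fin (p + 1) → ℝ)
        = L *ᵥ u s := by
    intro s
    funext a
    refine Fin.cases ?_ (fun i => ?_) a
    · simp [Matrix.mulVec, dotProduct, hL, hu, Fin.sum_univ_succ]
    · simp only [Matrix.mulVec, dotProduct, hL, hu, Matrix.of_apply,
        Fin.cons_succ, Fin.cons_zero, Fin.sum_univ_succ]
      rw [Finset.sum_eq_single i]
      · rcases Bool.eq_false_or_eq_true (s i) with h | h <;>
          simp [h, hm, hr] <;> ring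
      · intro b _ hb; simp [Ne.symm hb]
      · simp
  -- the sum of rank-one sign matrices is k • 1
  have hsum : (∑ s : Fin p → Bool, ((k / 2 ^ p : ℕ) : ℝ) • vecMulVec (u s) (u s))
      = (k : ℝ) • (1 : Matrix (Fin (p + 1)) (Fin (p + 1)) ℝ) := by
    ext a b
    simp only [Matrix.sum_apply, Matrix.smul_apply, vecMulVec_apply, smul_eq_mul,
      Matrix.one_apply]
    rcases eq_or_ne a b with rfl | hab
    · have h1 : ∀ s : Fin p → Bool, u s a * u s a = 1 := by
        intro s
        refine Fin.cases ?_ (fun i => ?_) a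
        · simp [hu]
        · rcases Bool.eq_false_or_eq_true (s i) with h | h <;> simp [hu, h]
      simp only [h1, mul_one, Finset.sum_const, Finset.card_univ, Fintype.card_fun,
        Fintype.card_bool, Fintype.card_fin, nsmul_eq_mul]
      rw [if_pos trivial, mul_one, ← Nat.cast_mul, Nat.mul_div_cancel' hk]
    · rw [if_neg hab, ← Finset.mul_sum]
      have hz0 : (∑ s : Fin p → Bool, u s a * u s b) = 0 := by
        -- find a coordinate to flip
        have key : ∀ (j : Fin p), (∀ s : Fin p → Bool,
            u (Function.update s j (!(s j))) a * u (Function.update s j (!(s j))) b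
              = -(u s a * u s b)) → (∑ s : Fin p → Bool, u s a * u s b) = 0 :=
          fun j h => flip_sum j _ h
        have hcons : ∀ (s : Fin p → Bool) (i : Fin p), u s i.succ =
            if s i then 1 else -1 := fun s i => by simp [hu]
        have hflip : ∀ (s : Fin p → Bool) (j : Fin p),
            u (Function.update s j (!(s j))) j.succ = -(u s j.succ) := by
          intro s j
          rcases Bool.eq_false_or_eq_true (s j) with h | h <;>
            simp [hcons, h]
        have hne : ∀ (s : Fin p → Bool) (j i : Fin p), i ≠ j →
            u (Function.update s j (!(s j))) i.succ = u s i.succ := by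
          intro s j i hij
          simp [hcons, Function.update_of_ne hij]
        have h0 : ∀ s : Fin p → Bool, u s 0 = 1 := fun s => by simp [hu]
        rcases Fin.eq_zero_or_eq_succ a with rfl | ⟨i, rfl⟩ <;>
          rcases Fin.eq_zero_or_eq_succ b with rfl | ⟨j, rfl⟩
        · exact absurd rfl hab
        · exact key j (fun s => by rw [h0, h0, hflip]; ring)
        · exact key i (fun s => by rw [h0, h0, hflip]; ring)
        · have hij : i ≠ j := fun h => hab (by rw [h])
          exact key j (fun s => by rw [hflip, hne s j i hij]; ring)
      rw [hz0, mul_zero, mul_zero]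
  -- factor the whole moment matrix
  have hfac : ∀ s : Fin p → Bool,
      vecMulVec (L *ᵥ u s) (L *ᵥ u s) = L * vecMulVec (u s) (u s) * Lᵀ := by
    intro s
    rw [vecMulVec_eq Unit, vecMulVec_eq Unit, replicateCol_mulVec, replicateRow_mulVec,
      Matrix.transpose_mul, Matrix.transpose_replicateCol]
    simp only [Matrix.mul_assoc]
  have hM : (∑ s : Fin p → Bool, ((k / 2 ^ p : ℕ) : ℝ) •
        vecMulVec
          (Fin.cons 1 (fun j => if s j then zmax j else zmin j) : Fin (p + 1) → ℝ)
          (Fin.cons 1 (fun j => if s j then zmax j else zmin j)))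
      = L * ((k : ℝ) • (1 : Matrix (Fin (p + 1)) (Fin (p + 1)) ℝ)) * Lᵀ := by
    rw [← hsum, Finset.mul_sum, Finset.sum_mul]
    refine Finset.sum_congr rfl fun s _ => ?_
    rw [hx s, hfac s, Matrix.mul_smul, Matrix.smul_mul]
  rw [hM, Matrix.det_mul, Matrix.det_mul, Matrix.det_transpose]
  -- determinant of L
  have hLtri : L.BlockTriangular OrderDual.toDual := by
    intro i j hij
    have hij' : i < j := hij
    rcases Fin.eq_zero_or_eq_succ i with rfl | ⟨i', rfl⟩ <;>
      rcases Fin.eq_zero_or_eq_succ j with rfl | ⟨j', rfl⟩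
    · exact absurd hij' (lt_irrefl _)
    · simp [hL]
    · exact absurd hij' (by simp [Fin.lt_def])
    · have : i' ≠ j' := by
        intro h; subst h; exact absurd hij' (lt_irrefl _)
      simp [hL, this]
  have hdetL : L.det = ∏ j, r j := by
    rw [Matrix.det_of_lowerTriangular L hLtri, Fin.prod_univ_succ]
    simp [hL]
  have hdetD : ((k : ℝ) • (1 : Matrix (Fin (p + 1)) (Fin (p + 1)) ℝ)).det
      = (k : ℝ) ^ (p + 1) := by
    rw [Matrix.det_smul, Matrix.det_one, mul_one, Fintype.card_fin]
  rw [hdetL, hdetD, hr]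
  rw [Finset.prod_div_distrib, Finset.prod_const, Finset.card_univ, Fintype.card_fin]
  rw [show ((4 : ℝ) ^ p) = (2 : ℝ) ^ p * 2 ^ p by rw [← mul_pow]; norm_num]
  field_simp
  rw [mul_comm, Finset.prod_pow]
end

section
/- Let z*_{1},...,z*_{k} be real values such that at least r of them are ≤ L and at least r of them are ≥ U, where L ≤ U. Then the sum of squared deviations about the sample mean satisfies ∑ᵢ(z*ᵢ - z̄*)² ≥ (r/2)(U - L)². -/
/-- If among `z₁,…,z_k` at least `r` values are `≤ L` and at least `r` values
are `≥ U` with `L ≤ U`, then `∑ (zᵢ - z̄)² ≥ (r/2)(U-L)²`. -/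
theorem stmt_7 (k r : ℕ) (hk : 0 < k) (z : Fin k → ℝ) (L U : ℝ) (hLU : L ≤ U)
    (hL : r ≤ (Finset.univ.filter fun i => z i ≤ L).card)
    (hU : r ≤ (Finset.univ.filter fun i => U ≤ z i).card) :
    ((r : ℝ) / 2) * (U - L) ^ 2 ≤ ∑ i, (z i - (∑ i, z i) / k) ^ 2 := by
  set m : ℝ := (∑ i, z i) / k with hm
  rcases eq_or_lt_of_le hLU with heq | hlt
  · simp only [heq, sub_self]
    have : ((r : ℝ) / 2) * (0:ℝ) ^ 2 = 0 := by ring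
    rw [this]
    exact Finset.sum_nonneg fun i _ => sq_nonneg _
  · obtain ⟨A, hA, hAcard⟩ := Finset.exists_subset_card_eq hL
    obtain ⟨B, hB, hBcard⟩ := Finset.exists_subset_card_eq hU
    set a : ℝ := max (m - L) 0 with ha
    set b : ℝ := max (U - m) 0 with hb
    have ha0 : 0 ≤ a := le_max_right _ _
    have hb0 : 0 ≤ b := le_max_right _ _
    have hab : U - L ≤ a + b := by
      have h1 : m - L ≤ a := le_max_left _ _
      have h2 : U - m ≤ b := le_max_left _ _
      linarith
    have hdisj : Disjoint A B := by
      rw [Finset.disjoint_left]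
      intro i hiA hiB
      have h1 : z i ≤ L := (Finset.mem_filter.mp (hA hiA)).2
      have h2 : U ≤ z i := (Finset.mem_filter.mp (hB hiB)).2
      linarith
    have hAle : ∀ i ∈ A, a ^ 2 ≤ (z i - m) ^ 2 := by
      intro i hiA
      have h1 : z i ≤ L := (Finset.mem_filter.mp (hA hiA)).2
      have habs : a ≤ |z i - m| := by
        rw [ha, max_le_iff]
        refine ⟨le_trans (by linarith) (neg_le_abs _), abs_nonneg _⟩
      calc a ^ 2 ≤ |z i - m| ^ 2 := pow_le_pow_left₀ ha0 habs 2
        _ = (z i - m) ^ 2 := sq_abs _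
    have hBle : ∀ i ∈ B, b ^ 2 ≤ (z i - m) ^ 2 := by
      intro i hiB
      have h1 : U ≤ z i := (Finset.mem_filter.mp (hB hiB)).2
      have habs : b ≤ |z i - m| := by
        rw [hb, max_le_iff]
        refine ⟨le_trans (by linarith) (le_abs_self _), abs_nonneg _⟩
      calc b ^ 2 ≤ |z i - m| ^ 2 := pow_le_pow_left₀ hb0 habs 2
        _ = (z i - m) ^ 2 := sq_abs _
    have key : (r : ℝ) * a ^ 2 + (r : ℝ) * b ^ 2 ≤ ∑ i, (z i - m) ^ 2 := by
      have h1 : ∑ i ∈ A ∪ B, (z i - m) ^ 2 ≤ ∑ i, (z i - m) ^ 2 :=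
        Finset.sum_le_sum_of_subset_of_nonneg (Finset.subset_univ _)
          (fun i _ _ => sq_nonneg _)
      rw [Finset.sum_union hdisj] at h1
      have h2 : (r : ℝ) * a ^ 2 ≤ ∑ i ∈ A, (z i - m) ^ 2 := by
        calc (r : ℝ) * a ^ 2 = ∑ _i ∈ A, a ^ 2 := by
              rw [Finset.sum_const, hAcard, nsmul_eq_mul]
          _ ≤ ∑ i ∈ A, (z i - m) ^ 2 := Finset.sum_le_sum hAle
      have h3 : (r : ℝ) * b ^ 2 ≤ ∑ i ∈ B, (z i - m) ^ 2 := by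
        calc (r : ℝ) * b ^ 2 = ∑ _i ∈ B, b ^ 2 := by
              rw [Finset.sum_const, hBcard, nsmul_eq_mul]
          _ ≤ ∑ i ∈ B, (z i - m) ^ 2 := Finset.sum_le_sum hBle
      linarith
    have hr0 : (0:ℝ) ≤ r := Nat.cast_nonneg r
    nlinarith [sq_nonneg (a - b), sq_nonneg (a + b), mul_nonneg hr0 (sq_nonneg (a - b)),
      mul_le_mul_of_nonneg_left (mul_self_le_mul_self (by linarith : (0:ℝ) ≤ U - L) hab) hr0]
end

section
/- Let X* be a k×(p+1) design matrix whose first column is all ones and remaining columns have sample means z̄*_j and sample variances var(z*_j) > 0, and let R be the sample correlation matrix of the last p columns. Then det((X*)ᵀX*) = k (k-1)^p det(R) ∏_{j=1}^p var(z*_j). -/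
open Matrix

/-- Sample mean of the `j`-th covariate column. -/
noncomputable def sMean {k p : ℕ} (z : Fin k → Fin p → ℝ) (j : Fin p) : ℝ :=
  (∑ i, z i j) / k

/-- Sample variance of the `j`-th covariate column. -/
noncomputable def sVar {k p : ℕ} (z : Fin k → Fin p → ℝ) (j : Fin p) : ℝ :=
  (∑ i, (z i j - sMean z j) ^ 2) / ((k : ℝ) - 1)

/-- Sample correlation matrix of the covariate columns. -/
noncomputable def sCorr {k p : ℕ} (z : Fin k → Fin p → ℝ) :
    Matrix (Fin p) (Fin p) ℝ :=
  Matrix.of fun j₁ j₂ =>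
    (∑ i, (z i j₁ - sMean z j₁) * (z i j₂ - sMean z j₂)) /
      (((k : ℝ) - 1) * Real.sqrt (sVar z j₁ * sVar z j₂))

/-- Design matrix with an all-ones first column. -/
def designX {k p : ℕ} (z : Fin k → Fin p → ℝ) :
    Matrix (Fin k) (Fin (p + 1)) ℝ :=
  Matrix.of fun i j => (Fin.cons 1 (z i) : Fin (p + 1) → ℝ) j

/-- `det (X*ᵀ X*) = k (k-1)^p det(R) ∏ⱼ var(z*_j)` for a design matrix with
intercept column, positive sample variances, and sample correlation matrix `R`. -/
theorem stmt_10 {k p : ℕ} (hk : 2 ≤ k) (z : Fin k → Fin p → ℝ)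
    (hvar : ∀ j, 0 < sVar z j) :
    ((designX z)ᵀ * designX z).det =
      (k : ℝ) * ((k : ℝ) - 1) ^ p * (sCorr z).det * ∏ j, sVar z j := by
  have hkne : (k : ℝ) ≠ 0 := by
    have : (0:ℕ) < k := by omega
    exact_mod_cast this.ne'
  have hk1ne : (k : ℝ) - 1 ≠ 0 := by
    have : (1:ℝ) < (k:ℝ) := by exact_mod_cast by omega
    linarith
  set m : Fin p → ℝ := sMean z with hm
  set S : Matrix (Fin p) (Fin p) ℝ :=
    Matrix.of fun j₁ j₂ => ∑ i, (z i j₁ - m j₁) * (z i j₂ - m j₂) with hS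
  set C : Matrix (Fin k) (Fin (p+1)) ℝ :=
    Matrix.of fun i j => (Fin.cons 1 (fun j' => z i j' - m j') : Fin (p+1) → ℝ) j with hC
  set E : Matrix (Fin (p+1)) (Fin (p+1)) ℝ :=
    Matrix.of fun a b => if a = b then 1 else
      if a = 0 then (Fin.cons 0 (fun j => -m j) : Fin (p+1) → ℝ) b else 0 with hE
  -- X * E = C
  have hXE : designX z * E = C := by
    ext i b
    rw [Matrix.mul_apply]
    refine Fin.cases ?_ (fun j => ?_) b
    · rw [Fin.sum_univ_succ]
      simp [hE, hC, designX, Fin.succ_ne_zero]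
    · rw [Fin.sum_univ_succ]
      have : ∀ a : Fin p, designX z i a.succ * E a.succ j.succ
          = if a = j then z i j else 0 := by
        intro a
        by_cases h : a = j
        · subst h; simp [hE, designX]
        · have : ¬ (a.succ = j.succ) := by simpa using h
          simp [hE, designX, this, h, Fin.succ_ne_zero]
      rw [Finset.sum_congr rfl fun a _ => this a]
      simp [hE, hC, designX, Fin.succ_ne_zero, (Fin.succ_ne_zero j).symm]
      ring
  have hdetE : E.det = 1 := by
    have ht : E.BlockTriangular id := by
      intro a b hba
      have hab : a ≠ b := by
        intro h; subst h; exact lt_irrefl _ hba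
      have ha0 : a ≠ 0 := by
        intro h; subst h; exact absurd hba (by simp)
      simp [hE, hab, ha0]
    rw [Matrix.det_of_upperTriangular ht]
    simp [hE]
  have h1 : ((designX z)ᵀ * designX z).det = (Cᵀ * C).det := by
    rw [← hXE, Matrix.transpose_mul, Matrix.mul_assoc, ← Matrix.mul_assoc (designX z)ᵀ]
    rw [Matrix.det_mul, Matrix.det_mul, Matrix.det_transpose, hdetE]
    ring
  -- entries of CᵀC
  have h00 : (Cᵀ * C) 0 0 = (k : ℝ) := by
    simp [Matrix.mul_apply, hC]
  have h0j : ∀ j : Fin p, (Cᵀ * C) 0 j.succ = 0 := by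
    intro j
    have : (Cᵀ * C) 0 j.succ = ∑ i, (z i j - m j) := by
      simp [Matrix.mul_apply, hC]
    rw [this]
    simp only [Finset.sum_sub_distrib, Finset.sum_const, Finset.card_univ, Fintype.card_fin,
      nsmul_eq_mul]
    rw [hm]
    simp [sMean]
    field_simp
    ring
  have hsub : (Cᵀ * C).submatrix Fin.succ Fin.succ = S := by
    ext j₁ j₂
    simp [Matrix.mul_apply, hC, hS]
  have h2 : (Cᵀ * C).det = (k : ℝ) * S.det := by
    rw [Matrix.det_succ_row_zero, Fin.sum_univ_succ]
    have hrest : ∀ j : Fin p,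
        (-1 : ℝ) ^ ((j.succ : Fin (p+1)) : ℕ) * (Cᵀ * C) 0 j.succ *
          ((Cᵀ * C).submatrix Fin.succ (j.succ).succAbove).det = 0 := by
      intro j; rw [h0j]; ring
    rw [Finset.sum_congr rfl fun j _ => hrest j]
    simp only [Finset.sum_const_zero, add_zero, Fin.val_zero, pow_zero, one_mul]
    rw [h00, Fin.succAbove_zero, hsub]
  -- S = D * ((k-1) • R) * D
  set D : Matrix (Fin p) (Fin p) ℝ := Matrix.diagonal fun j => Real.sqrt (sVar z j) with hD
  have hfact : S = D * (((k : ℝ) - 1) • sCorr z) * D := by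
    ext j₁ j₂
    rw [Matrix.mul_assoc, Matrix.diagonal_mul, Matrix.mul_diagonal]
    have h1' : Real.sqrt (sVar z j₁) ≠ 0 := by
      exact (Real.sqrt_pos.mpr (hvar j₁)).ne'
    have h2' : Real.sqrt (sVar z j₂) ≠ 0 := by
      exact (Real.sqrt_pos.mpr (hvar j₂)).ne'
    have hsq : Real.sqrt (sVar z j₁ * sVar z j₂)
        = Real.sqrt (sVar z j₁) * Real.sqrt (sVar z j₂) :=
      Real.sqrt_mul (hvar j₁).le _
    simp only [Matrix.smul_apply, sCorr, Matrix.of_apply, smul_eq_mul, hS, hm]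
    rw [hsq]
    field_simp
  have hDdet : D.det = ∏ j, Real.sqrt (sVar z j) := by simp [hD]
  have hSdet : S.det = ((k : ℝ) - 1) ^ p * (sCorr z).det * ∏ j, sVar z j := by
    rw [hfact, Matrix.det_mul, Matrix.det_mul, Matrix.det_smul, hDdet]
    have : (∏ j, Real.sqrt (sVar z j)) * (∏ j, Real.sqrt (sVar z j)) = ∏ j, sVar z j := by
      rw [← Finset.prod_mul_distrib]
      exact Finset.prod_congr rfl fun j _ => Real.mul_self_sqrt (hvar j).le
    rw [Fintype.card_fin]
    calc (∏ j, Real.sqrt (sVar z j)) * (((k:ℝ)-1)^p * (sCorr z).det) * ∏ j, Real.sqrt (sVar z j)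
        = ((k:ℝ)-1)^p * (sCorr z).det *
          ((∏ j, Real.sqrt (sVar z j)) * ∏ j, Real.sqrt (sVar z j)) := by ring
      _ = _ := by rw [this]
  rw [h1, h2, hSdet]; ring
end

section
/- Let X* be a k×(p+1) matrix with first column all ones, with positive sample variances var(z*_j) for each covariate column and sample correlation matrix R positive definite. Then the (0,0) entry of σ²((X*)ᵀX*)⁻¹ equals σ²(1/k + uᵀR⁻¹u/(k-1)) ≥ σ²/k, where u_j = -z̄*_j/√(var(z*_j)). -/
open Matrix

/-- The variance of the intercept estimator: the `(0,0)` entry of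
`σ² (X*ᵀX*)⁻¹` equals `σ² (1/k + uᵀR⁻¹u/(k-1))` and is at least `σ²/k`,
where `u_j = -z̄*_j/√(var z*_j)`. -/
theorem stmt_11 {k p : ℕ} (hk : 2 ≤ k) (z : Fin k → Fin p → ℝ)
    (hvar : ∀ j, 0 < sVar z j) (hR : (sCorr z).PosDef)
    (σ2 : ℝ) (hσ2 : 0 < σ2) :
    σ2 * (((designX z)ᵀ * designX z)⁻¹ 0 0) =
      σ2 * (1 / k +
        ((fun j => -sMean z j / Real.sqrt (sVar z j)) ⬝ᵥ
          (sCorr z)⁻¹.mulVec fun j => -sMean z j / Real.sqrt (sVar z j)) /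
          ((k : ℝ) - 1)) ∧
      σ2 / k ≤ σ2 * (((designX z)ᵀ * designX z)⁻¹ 0 0) := by
  classical
  have hkpos : (0:ℝ) < k := by
    have : 0 < k := lt_of_lt_of_le (by norm_num) hk
    exact_mod_cast this
  have hk0 : (k:ℝ) ≠ 0 := hkpos.ne'
  have hk1 : (0:ℝ) < (k:ℝ) - 1 := by
    have : (2:ℝ) ≤ k := by exact_mod_cast hk
    linarith
  have hk1' : ((k:ℝ) - 1) ≠ 0 := hk1.ne'
  set m : Fin p → ℝ := sMean z with hm
  set R := sCorr z with hRdef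
  set u : Fin p → ℝ := fun j => -m j / Real.sqrt (sVar z j) with hu
  set s : Fin p → ℝ := fun j => Real.sqrt (sVar z j) with hs
  have hspos : ∀ j, 0 < s j := fun j => Real.sqrt_pos.2 (hvar j)
  have huj : ∀ j, u j = -m j / s j := fun j => rfl
  -- sums of columns
  have hsum : ∀ j, ∑ i, z i j = k * m j := by
    intro j
    rw [hm]
    unfold sMean
    field_simp
  -- diagonal matrices
  set Δ : Matrix (Fin p) (Fin p) ℝ := Matrix.diagonal s with hΔdef
  set Δi : Matrix (Fin p) (Fin p) ℝ := Matrix.diagonal (fun j => (s j)⁻¹) with hΔidef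
  have hΔΔi : Δ * Δi = 1 := by
    rw [hΔdef, hΔidef, Matrix.diagonal_mul_diagonal]
    have : (fun j => s j * (s j)⁻¹) = fun _ => (1:ℝ) :=
      funext fun j => mul_inv_cancel₀ (hspos j).ne'
    rw [this, Matrix.diagonal_one]
  have hRinv : R * R⁻¹ = 1 :=
    Matrix.mul_nonsing_inv _ ((Matrix.isUnit_iff_isUnit_det R).mp hR.isUnit)
  -- centered Gram matrix
  set C : Matrix (Fin p) (Fin p) ℝ :=
    Matrix.of (fun j₁ j₂ => ∑ i, (z i j₁ - m j₁) * (z i j₂ - m j₂)) with hCdef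
  have hC : C = ((k:ℝ)-1) • (Δ * R * Δ) := by
    ext j₁ j₂
    have hRentry : R j₁ j₂ = (C j₁ j₂) / (((k:ℝ)-1) * (s j₁ * s j₂)) := by
      rw [hRdef]
      show sCorr z j₁ j₂ = _
      unfold sCorr
      rw [Matrix.of_apply, Real.sqrt_mul (hvar j₁).le]
      rfl
    rw [Matrix.smul_apply]
    rw [show (Δ * R * Δ) j₁ j₂ = s j₁ * R j₁ j₂ * s j₂ by
      simp [hΔdef, Matrix.mul_diagonal, Matrix.diagonal_mul, mul_assoc]]
    rw [hRentry]
    field_simp [hk1', (hspos j₁).ne', (hspos j₂).ne']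
    linear_combination (-C j₁ j₂) * inv_mul_cancel₀ hk1'
  set B : Matrix (Fin p) (Fin p) ℝ := ((k:ℝ)-1)⁻¹ • (Δi * R⁻¹ * Δi) with hBdef
  have hCB : C * B = 1 := by
    rw [hC, hBdef, Matrix.smul_mul, Matrix.mul_smul, smul_smul,
      mul_inv_cancel₀ hk1', one_smul]
    calc Δ * R * Δ * (Δi * R⁻¹ * Δi)
        = Δ * R * (Δ * Δi) * (R⁻¹ * Δi) := by simp only [Matrix.mul_assoc]
      _ = Δ * (R * R⁻¹) * Δi := by
          rw [hΔΔi, Matrix.mul_one]; simp only [Matrix.mul_assoc]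
      _ = 1 := by rw [hRinv, Matrix.mul_one, hΔΔi]
  -- the Gram matrix A
  set A : Matrix (Fin (p+1)) (Fin (p+1)) ℝ := (designX z)ᵀ * designX z with hAdef
  have hA00 : A 0 0 = k := by
    simp [hAdef, Matrix.mul_apply, designX]
  have hA0s : ∀ j, A 0 j.succ = k * m j := by
    intro j
    simp only [hAdef, Matrix.mul_apply, Matrix.transpose_apply, designX,
      Matrix.of_apply, Fin.cons_zero, Fin.cons_succ, one_mul]
    exact hsum j
  have hAs0 : ∀ j, A j.succ 0 = k * m j := by
    intro j
    simp only [hAdef, Matrix.mul_apply, Matrix.transpose_apply, designX,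
      Matrix.of_apply, Fin.cons_zero, Fin.cons_succ, mul_one]
    exact hsum j
  have hAss : ∀ j₁ j₂, A j₁.succ j₂.succ = C j₁ j₂ + k * m j₁ * m j₂ := by
    intro j₁ j₂
    simp only [hAdef, Matrix.mul_apply, Matrix.transpose_apply, designX,
      Matrix.of_apply, Fin.cons_succ]
    have expand : C j₁ j₂ = (∑ i, z i j₁ * z i j₂) - m j₂ * (∑ i, z i j₁)
        - m j₁ * (∑ i, z i j₂) + k * (m j₁ * m j₂) := by
      rw [hCdef]
      simp only [Matrix.of_apply]
      have h : ∀ i : Fin k, (z i j₁ - m j₁) * (z i j₂ - m j₂)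
          = z i j₁ * z i j₂ - m j₂ * z i j₁ - m j₁ * z i j₂ + m j₁ * m j₂ :=
        fun i => by ring
      rw [Finset.sum_congr rfl fun i _ => h i, Finset.sum_add_distrib,
        Finset.sum_sub_distrib, Finset.sum_sub_distrib, ← Finset.mul_sum,
        ← Finset.mul_sum, Finset.sum_const, Finset.card_univ, Fintype.card_fin,
        nsmul_eq_mul]
    rw [expand, hsum j₁, hsum j₂]
    ring
  -- the candidate inverse
  set N : Matrix (Fin (p+1)) (Fin (p+1)) ℝ := Matrix.of (fun i j =>
    Fin.cases
      (Fin.cases (1/(k:ℝ) + m ⬝ᵥ B *ᵥ m) (fun j' => -((m ᵥ* B) j')) j)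
      (fun i' => Fin.cases (-((B *ᵥ m) i')) (fun j' => B i' j') j)
      i) with hNdef
  have hN00 : N 0 0 = 1/(k:ℝ) + m ⬝ᵥ B *ᵥ m := by
    simp [hNdef]
  have hN0s : ∀ j, N 0 j.succ = -((m ᵥ* B) j) := by
    intro j; simp [hNdef]
  have hNs0 : ∀ i, N i.succ 0 = -((B *ᵥ m) i) := by
    intro i; simp [hNdef]
  have hNss : ∀ i j, N i.succ j.succ = B i j := by
    intro i j; simp [hNdef]
  have hAN : A * N = 1 := by
    ext i j
    rw [Matrix.mul_apply, Fin.sum_univ_succ]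
    induction i using Fin.cases with
    | zero =>
      induction j using Fin.cases with
      | zero =>
        rw [hA00, hN00]
        simp only [hA0s, hNs0]
        have hsum1 : ∑ a, (k:ℝ) * m a * -((B *ᵥ m) a)
            = -((k:ℝ) * (m ⬝ᵥ B *ᵥ m)) := by
          simp [dotProduct, Finset.mul_sum, mul_assoc]
        rw [hsum1, Matrix.one_apply_eq]
        field_simp
        ring
      | succ j =>
        rw [hA00, hN0s]
        simp only [hA0s, hNss]
        have hsum1 : ∑ a, (k:ℝ) * m a * B a j = (k:ℝ) * (m ᵥ* B) j := by
          simp [Matrix.vecMul, dotProduct, Finset.mul_sum, mul_assoc]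
        rw [hsum1, Matrix.one_apply_ne (Ne.symm (Fin.succ_ne_zero j))]
        ring
    | succ i =>
      induction j using Fin.cases with
      | zero =>
        rw [hAs0, hN00]
        simp only [hAss, hNs0]
        have hCBm : C *ᵥ (B *ᵥ m) = m := by
          rw [Matrix.mulVec_mulVec, hCB, Matrix.one_mulVec]
        have hsplit : ∑ a, (C i a + (k:ℝ) * m i * m a) * -((B *ᵥ m) a)
            = -((C *ᵥ (B *ᵥ m)) i) - (k:ℝ) * m i * (m ⬝ᵥ B *ᵥ m) := by
          have h : ∀ a, (C i a + (k:ℝ) * m i * m a) * -((B *ᵥ m) a)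
              = -(C i a * (B *ᵥ m) a) - (k:ℝ) * m i * (m a * (B *ᵥ m) a) :=
            fun a => by ring
          rw [Finset.sum_congr rfl fun a _ => h a, Finset.sum_sub_distrib,
            Finset.sum_neg_distrib, ← Finset.mul_sum]
          rfl
        rw [hsplit, hCBm, Matrix.one_apply_ne (Fin.succ_ne_zero i)]
        field_simp
        ring
      | succ j =>
        rw [hAs0, hN0s]
        simp only [hAss, hNss]
        have hsplit : ∑ a, (C i a + (k:ℝ) * m i * m a) * B a j
            = (C * B) i j + (k:ℝ) * m i * ((m ᵥ* B) j) := by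
          simp only [Matrix.mul_apply, Matrix.vecMul, dotProduct, add_mul,
            Finset.sum_add_distrib, Finset.mul_sum, mul_assoc]
        rw [hsplit, hCB]
        have : (k:ℝ) * m i * -((m ᵥ* B) j)
            + ((1 : Matrix (Fin p) (Fin p) ℝ) i j + (k:ℝ) * m i * ((m ᵥ* B) j))
            = (1 : Matrix (Fin p) (Fin p) ℝ) i j := by ring
        rw [this]
        simp [Matrix.one_apply, Fin.succ_inj]
  have hInv : A⁻¹ = N := Matrix.inv_eq_right_inv hAN
  -- identify the quadratic form
  have hDm : Δi *ᵥ m = -u := by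
    funext j
    simp only [hΔidef, Matrix.mulVec_diagonal, Pi.neg_apply, huj]
    field_simp
  have hq : m ⬝ᵥ B *ᵥ m = (u ⬝ᵥ R⁻¹ *ᵥ u) / ((k:ℝ)-1) := by
    rw [hBdef, Matrix.smul_mulVec, dotProduct_smul]
    rw [show (Δi * R⁻¹ * Δi) *ᵥ m = Δi *ᵥ (R⁻¹ *ᵥ (Δi *ᵥ m)) by
      rw [Matrix.mulVec_mulVec, Matrix.mulVec_mulVec]]
    rw [hDm, Matrix.mulVec_neg]
    have h2 : ∀ y : Fin p → ℝ, m ⬝ᵥ (Δi *ᵥ y) = (-u) ⬝ᵥ y := by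
      intro y
      simp only [dotProduct, hΔidef, Matrix.mulVec_diagonal, Pi.neg_apply, huj]
      refine Finset.sum_congr rfl fun j _ => ?_
      field_simp
    rw [h2, dotProduct_neg, neg_dotProduct, neg_neg,
      smul_eq_mul, inv_mul_eq_div]
  have hnn : 0 ≤ u ⬝ᵥ R⁻¹ *ᵥ u := by
    have := hR.inv.posSemidef.dotProduct_mulVec_nonneg u
    simpa using this
  have main : A⁻¹ 0 0 = 1/(k:ℝ) + (u ⬝ᵥ R⁻¹ *ᵥ u) / ((k:ℝ)-1) := by
    rw [hInv, hN00, hq]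
  constructor
  · rw [main]
  · rw [main]
    have h0 : 0 ≤ (u ⬝ᵥ R⁻¹ *ᵥ u) / ((k:ℝ)-1) := div_nonneg hnn hk1.le
    have : σ2 / k = σ2 * (1/(k:ℝ)) := by ring
    rw [this]
    exact mul_le_mul_of_nonneg_left (le_add_of_nonneg_right h0) hσ2.le
end

section
/- Under the assumptions of the D-optimality IBOSS subdata: if the k = 2pr subdata values for covariate j include at least r values ≤ z_{(r)j} and r values ≥ z_{(n-r+1)j}, and R is the sample correlation matrix of the subdata with λ_min(R) > 0, then the variance of the j-th slope least squares estimator satisfies V(β̂ⱼ) ≤ 4pσ² / (k λ_min(R) (z_{(n-r+1)j} - z_{(r)j})²). -/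
open Matrix

lemma rayleigh_lower {p : ℕ} {A : Matrix (Fin p) (Fin p) ℝ} (hA : A.IsHermitian)
    {c : ℝ} (hc : ∀ i, c ≤ hA.eigenvalues i) (x : Fin p → ℝ) :
    c * (x ⬝ᵥ x) ≤ x ⬝ᵥ A *ᵥ x := by
  classical
  set V : Matrix (Fin p) (Fin p) ℝ := (hA.eigenvectorUnitary : Matrix (Fin p) (Fin p) ℝ) with hV
  have hstar : star V = Vᵀ := by
    rw [Matrix.star_eq_conjTranspose, Matrix.conjTranspose_eq_transpose_of_trivial]
  set y : Fin p → ℝ := Vᵀ *ᵥ x with hy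
  have hdot : ∀ w : Fin p → ℝ, x ⬝ᵥ V *ᵥ w = y ⬝ᵥ w := by
    intro w
    rw [Matrix.dotProduct_mulVec, hy, Matrix.mulVec_transpose]
  have hxAx : x ⬝ᵥ A *ᵥ x = ∑ i, hA.eigenvalues i * (y i)^2 := by
    conv_lhs => rw [hA.spectral_theorem, Unitary.conjStarAlgAut_apply]
    rw [← hV, ← Matrix.mulVec_mulVec, ← Matrix.mulVec_mulVec, hstar, hdot]
    simp only [Matrix.mulVec_diagonal, dotProduct]
    refine Finset.sum_congr rfl fun i _ => ?_
    simp [Function.comp]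
    ring
  have hxx : x ⬝ᵥ x = ∑ i, (y i)^2 := by
    have h1 : V * Vᵀ = 1 := by
      rw [← hstar]
      exact (Matrix.mem_unitaryGroup_iff).mp (hA.eigenvectorUnitary).2
    have : y ⬝ᵥ y = x ⬝ᵥ x := by
      rw [hy, Matrix.mulVec_transpose, ← Matrix.dotProduct_mulVec,
        Matrix.mulVec_vecMul, h1, Matrix.one_mulVec]
    rw [← this]
    simp [dotProduct, sq]
  rw [hxAx, hxx, Finset.mul_sum]
  refine Finset.sum_le_sum fun i _ => ?_
  exact mul_le_mul_of_nonneg_right (hc i) (sq_nonneg _)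

lemma var_sum_lower {k : ℕ} (r : ℕ) (x : Fin k → ℝ) (m L U : ℝ) (hLU : L < U)
    (hL : r ≤ (Finset.univ.filter fun i => x i ≤ L).card)
    (hU : r ≤ (Finset.univ.filter fun i => U ≤ x i).card) :
    (r : ℝ) * (U - L)^2 / 2 ≤ ∑ i, (x i - m)^2 := by
  classical
  obtain ⟨S1, hS1sub, hS1card⟩ := Finset.exists_subset_card_eq hL
  obtain ⟨S2, hS2sub, hS2card⟩ := Finset.exists_subset_card_eq hU
  have hdisj : Disjoint S1 S2 := by
    rw [Finset.disjoint_left]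
    intro i h1 h2
    have h1' := (Finset.mem_filter.mp (hS1sub h1)).2
    have h2' := (Finset.mem_filter.mp (hS2sub h2)).2
    linarith
  set a := max (m - L) 0 with ha
  set b := max (U - m) 0 with hb
  have key1 : ∀ i ∈ S1, a^2 ≤ (x i - m)^2 := by
    intro i h1
    have hx := (Finset.mem_filter.mp (hS1sub h1)).2
    rcases le_or_gt L m with h | h
    · have h1 : a = m - L := max_eq_left (by linarith)
      have : a ≤ m - x i := by rw [h1]; linarith
      calc a^2 ≤ (m - x i)^2 := by nlinarith [le_max_right (m - L) (0:ℝ)]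
        _ = (x i - m)^2 := by ring
    · have h1 : a = 0 := max_eq_right (by linarith)
      rw [h1]; simpa using sq_nonneg (x i - m)
  have key2 : ∀ i ∈ S2, b^2 ≤ (x i - m)^2 := by
    intro i h2
    have hx := (Finset.mem_filter.mp (hS2sub h2)).2
    rcases le_or_gt m U with h | h
    · have h1 : b = U - m := max_eq_left (by linarith)
      have : b ≤ x i - m := by rw [h1]; linarith
      nlinarith [le_max_right (U - m) (0:ℝ)]
    · have h1 : b = 0 := max_eq_right (by linarith)
      rw [h1]; simpa using sq_nonneg (x i - m)
  have hsum : (r : ℝ) * a^2 + (r : ℝ) * b^2 ≤ ∑ i ∈ S1 ∪ S2, (x i - m)^2 := by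
    rw [Finset.sum_union hdisj]
    gcongr
    · calc (r : ℝ) * a^2 = S1.card • a^2 := by rw [hS1card, nsmul_eq_mul]
        _ ≤ ∑ i ∈ S1, (x i - m)^2 := Finset.card_nsmul_le_sum S1 _ _ key1
    · calc (r : ℝ) * b^2 = S2.card • b^2 := by rw [hS2card, nsmul_eq_mul]
        _ ≤ ∑ i ∈ S2, (x i - m)^2 := Finset.card_nsmul_le_sum S2 _ _ key2
  have habsum : U - L ≤ a + b := by
    have := le_max_left (m - L) (0:ℝ)
    have := le_max_left (U - m) (0:ℝ)
    linarith
  have hfin : (r : ℝ) * (U - L)^2 / 2 ≤ (r : ℝ) * a^2 + (r : ℝ) * b^2 := by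
    have h0a : (0:ℝ) ≤ a := le_max_right _ _
    have h0b : (0:ℝ) ≤ b := le_max_right _ _
    have hr0 : (0:ℝ) ≤ r := Nat.cast_nonneg r
    have h2 : (U - L)^2 ≤ (a + b)^2 := by nlinarith
    nlinarith [mul_le_mul_of_nonneg_left h2 hr0, mul_nonneg hr0 (sq_nonneg (a - b))]
  refine hfin.trans (hsum.trans ?_)
  apply Finset.sum_le_sum_of_subset_of_nonneg (Finset.subset_univ _)
  intro i _ _
  positivity

lemma quadform_eq {k p : ℕ} (z : Fin k → Fin p → ℝ) (D : Fin p → ℝ)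
    (hsum0 : ∀ j', ∑ i, (z i j' - sMean z j') = 0)
    (hSDR : ∀ j1 j2, ∑ i, (z i j1 - sMean z j1) * (z i j2 - sMean z j2)
      = D j1 * D j2 * sCorr z j1 j2)
    (w : Fin (p+1) → ℝ) :
    w ⬝ᵥ ((designX z)ᵀ * designX z) *ᵥ w
      = (k:ℝ) * (w 0 + ∑ j', w j'.succ * sMean z j')^2
        + (fun j' => D j' * w j'.succ) ⬝ᵥ sCorr z *ᵥ (fun j' => D j' * w j'.succ) := by
  classical
  set m : ℝ := w 0 + ∑ j', w j'.succ * sMean z j' with hm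
  set t : Fin k → ℝ := fun i => ∑ j', w j'.succ * (z i j' - sMean z j') with ht
  have step1 : w ⬝ᵥ ((designX z)ᵀ * designX z) *ᵥ w = ∑ i, ((designX z *ᵥ w) i)^2 := by
    rw [← Matrix.mulVec_mulVec, Matrix.dotProduct_mulVec, Matrix.vecMul_transpose]
    simp [dotProduct, sq]
  have step2 : ∀ i, (designX z *ᵥ w) i = m + t i := by
    intro i
    rw [Matrix.mulVec]
    show ∑ s, designX z i s * w s = _
    rw [Fin.sum_univ_succ]
    simp only [designX, Matrix.of_apply, Fin.cons_zero, Fin.cons_succ, one_mul, hm, ht]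
    rw [add_assoc, ← Finset.sum_add_distrib]
    congr 1
    exact Finset.sum_congr rfl fun j' _ => by ring
  have htsum : ∑ i, t i = 0 := by
    rw [ht]
    rw [Finset.sum_comm]
    simp only [← Finset.mul_sum, hsum0, mul_zero, Finset.sum_const_zero]
  have step3 : ∑ i, ((designX z *ᵥ w) i)^2 = (k:ℝ) * m^2 + ∑ i, (t i)^2 := by
    simp only [step2]
    have : ∑ i, (m + t i)^2 = ∑ i, (m^2 + 2*m*(t i) + (t i)^2) := by
      refine Finset.sum_congr rfl fun i _ => by ring
    rw [this, Finset.sum_add_distrib, Finset.sum_add_distrib, Finset.sum_const,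
      ← Finset.mul_sum, htsum, mul_zero, add_zero, Finset.card_univ, Fintype.card_fin,
      nsmul_eq_mul]
  have step4 : ∑ i, (t i)^2
      = (fun j' => D j' * w j'.succ) ⬝ᵥ sCorr z *ᵥ (fun j' => D j' * w j'.succ) := by
    have expand : ∑ i, (t i)^2
        = ∑ j1, ∑ j2, (w j1.succ * w j2.succ) * ∑ i, (z i j1 - sMean z j1) * (z i j2 - sMean z j2) := by
      simp only [ht, sq, Finset.sum_mul_sum]
      rw [Finset.sum_comm]
      refine Finset.sum_congr rfl fun j1 _ => ?_
      rw [Finset.sum_comm]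
      refine Finset.sum_congr rfl fun j2 _ => ?_
      rw [Finset.mul_sum]
      refine Finset.sum_congr rfl fun i _ => by ring
    rw [expand]
    simp only [dotProduct, Matrix.mulVec, hSDR]
    refine Finset.sum_congr rfl fun j1 _ => ?_
    rw [Finset.mul_sum]
    refine Finset.sum_congr rfl fun j2 _ => ?_
    show w j1.succ * w j2.succ * (D j1 * D j2 * sCorr z j1 j2) = _
    ring
  rw [step1, step3, step4]

/-- IBOSS variance upper bound: with `k = 2pr` subdata points whose `j`-th
covariate values include at least `r` values `≤ L` and `r` values `≥ U`
(`L < U`), and sample correlation matrix `R` with `λ_min(R) > 0`, the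
variance of the `j`-th slope estimator satisfies
`V(β̂ⱼ) ≤ 4pσ²/(k λ_min(R) (U-L)²)`. -/
theorem stmt_13 {k p r : ℕ} (hp : 0 < p) (hr : 0 < r) (hkpr : k = 2 * p * r)
    (z : Fin k → Fin p → ℝ) (j : Fin p) (L U : ℝ) (hLU : L < U)
    (hL : r ≤ (Finset.univ.filter fun i => z i j ≤ L).card)
    (hU : r ≤ (Finset.univ.filter fun i => U ≤ z i j).card)
    (hR : (sCorr z).PosDef)
    (hlam : 0 < Finset.univ.inf' ⟨j, Finset.mem_univ j⟩ hR.1.eigenvalues)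
    (σ2 : ℝ) (hσ2 : 0 < σ2) :
    σ2 * (((designX z)ᵀ * designX z)⁻¹ j.succ j.succ) ≤
      4 * p * σ2 /
        ((k : ℝ) * (Finset.univ.inf' ⟨j, Finset.mem_univ j⟩ hR.1.eigenvalues) *
          (U - L) ^ 2) := by
  classical
  set lam := Finset.univ.inf' ⟨j, Finset.mem_univ j⟩ hR.1.eigenvalues with hlamdef
  have hk2 : 2 ≤ k := by
    rw [hkpr]
    calc 2 = 2*1*1 := by norm_num
      _ ≤ 2*p*r := Nat.mul_le_mul (Nat.mul_le_mul (le_refl 2) hp) hr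
  have hkR : (0:ℝ) < (k:ℝ) - 1 := by
    have : (2:ℝ) ≤ (k:ℝ) := by exact_mod_cast hk2
    linarith
  have hk0 : (k:ℝ) ≠ 0 := by
    have : (0:ℝ) < (k:ℝ) := by linarith
    exact this.ne'
  have hsum0 : ∀ j', ∑ i, (z i j' - sMean z j') = 0 := by
    intro j'
    rw [Finset.sum_sub_distrib, Finset.sum_const, Finset.card_univ, Fintype.card_fin,
      nsmul_eq_mul, sMean]
    field_simp
    ring
  have hSvv : ∀ j', ∑ i, (z i j' - sMean z j')^2 = ((k:ℝ)-1) * sVar z j' := by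
    intro j'
    rw [sVar]
    field_simp
  have hvpos : ∀ j', 0 < sVar z j' := by
    intro j'
    have hnn : 0 ≤ sVar z j' :=
      div_nonneg (Finset.sum_nonneg fun i _ => sq_nonneg _) (by linarith)
    rcases hnn.lt_or_eq with h | h
    · exact h
    · exfalso
      have hzero : ∑ i, (z i j' - sMean z j')^2 = 0 := by
        rw [hSvv j', ← h, mul_zero]
      have hcc : sCorr z j' j' = 0 := by
        simp only [sCorr, Matrix.of_apply]
        have h2 : (∑ i, (z i j' - sMean z j') * (z i j' - sMean z j')) = 0 := by
          simpa [sq] using hzero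
        rw [h2, zero_div]
      have hne : (Pi.single j' 1 : Fin p → ℝ) ≠ 0 := by
        intro h0
        simpa using congr_fun h0 j'
      have hpos := hR.dotProduct_mulVec_pos hne
      rw [star_trivial] at hpos
      rw [single_dotProduct] at hpos
      simp only [Matrix.mulVec_single, mul_one, one_mul, MulOpposite.op_one, one_smul, Matrix.col_apply] at hpos
      rw [hcc] at hpos
      exact lt_irrefl 0 hpos
  set D : Fin p → ℝ := fun j' => Real.sqrt (((k:ℝ)-1) * sVar z j') with hD
  have hDpos : ∀ j', 0 < D j' := by
    intro j'
    exact Real.sqrt_pos.mpr (mul_pos hkR (hvpos j'))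
  have hDsq : ∀ j', (D j')^2 = ((k:ℝ)-1) * sVar z j' := by
    intro j'
    exact Real.sq_sqrt (le_of_lt (mul_pos hkR (hvpos j')))
  have hSDR : ∀ j1 j2, ∑ i, (z i j1 - sMean z j1) * (z i j2 - sMean z j2)
      = D j1 * D j2 * sCorr z j1 j2 := by
    intro j1 j2
    have hd : D j1 * D j2 = ((k:ℝ)-1) * Real.sqrt (sVar z j1 * sVar z j2) := by
      rw [hD]
      rw [← Real.sqrt_mul (mul_pos hkR (hvpos j1)).le]
      rw [show ((k:ℝ)-1) * sVar z j1 * (((k:ℝ)-1) * sVar z j2)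
          = (((k:ℝ)-1))^2 * (sVar z j1 * sVar z j2) by ring]
      rw [Real.sqrt_mul (sq_nonneg _), Real.sqrt_sq (by linarith)]
    have hden : ((k:ℝ)-1) * Real.sqrt (sVar z j1 * sVar z j2) ≠ 0 := by
      have h1 : 0 < Real.sqrt (sVar z j1 * sVar z j2) :=
        Real.sqrt_pos.mpr (mul_pos (hvpos j1) (hvpos j2))
      exact (mul_pos hkR h1).ne'
    simp only [sCorr, Matrix.of_apply]
    rw [hd, mul_comm (((k:ℝ)-1) * Real.sqrt (sVar z j1 * sVar z j2)),
      div_mul_cancel₀ _ hden]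
  -- A is positive definite
  set A : Matrix (Fin (p+1)) (Fin (p+1)) ℝ := (designX z)ᵀ * designX z with hA
  have hAherm : A.IsHermitian := by
    rw [Matrix.IsHermitian, hA, Matrix.conjTranspose_eq_transpose_of_trivial,
      Matrix.transpose_mul, Matrix.transpose_transpose]
  have hRsemi : ∀ u : Fin p → ℝ, 0 ≤ u ⬝ᵥ sCorr z *ᵥ u := by
    intro u
    rcases eq_or_ne u 0 with h | h
    · rw [h]; simp
    · have h2 := hR.dotProduct_mulVec_pos h
      rw [star_trivial] at h2
      exact h2.le
  have hApd : A.PosDef := by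
    refine Matrix.PosDef.of_dotProduct_mulVec_pos hAherm fun x hx => ?_
    rw [star_trivial, quadform_eq z D hsum0 hSDR x]
    set u : Fin p → ℝ := fun j' : Fin p => D j' * x j'.succ with hu
    rcases eq_or_ne u 0 with h | h
    · have hxsucc : ∀ j' : Fin p, x j'.succ = 0 := by
        intro j'
        have := congr_fun h j'
        simp only [Pi.zero_apply] at this
        exact (mul_eq_zero.mp this).resolve_left (hDpos j').ne'
      have hx0 : x 0 ≠ 0 := by
        intro h0
        apply hx
        funext s
        refine Fin.cases ?_ ?_ s
        · exact h0
        · exact hxsucc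
      have hm : x 0 + ∑ j', x j'.succ * sMean z j' = x 0 := by
        simp [hxsucc]
      rw [hm, h]
      have h1 : (0:ℝ) ≤ (0 : Fin p → ℝ) ⬝ᵥ sCorr z *ᵥ (0 : Fin p → ℝ) := by simp
      have h2 : 0 < (k:ℝ) * (x 0)^2 := by
        have hkpos : (0:ℝ) < (k:ℝ) := by linarith
        have hx2 : 0 < (x 0)^2 :=
          lt_of_le_of_ne (sq_nonneg _) (Ne.symm (pow_ne_zero 2 hx0))
        exact mul_pos hkpos hx2
      simp only [zero_dotProduct]
      linarith [h2]
    · have h1 := hR.dotProduct_mulVec_pos h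
      rw [star_trivial] at h1
      have h2 : 0 ≤ (k:ℝ) * (x 0 + ∑ j', x j'.succ * sMean z j')^2 := by positivity
      linarith
  have hlamle : ∀ i, lam ≤ hR.1.eigenvalues i := fun i =>
    Finset.inf'_le _ (Finset.mem_univ i)
  -- lower bound on quadratic form for vectors with coordinate 1 at j.succ
  set c : ℝ := lam * ((r:ℝ) * (U - L)^2 / 2) with hc
  have hcpos : 0 < c := by
    have hrpos : (0:ℝ) < (r:ℝ) := by exact_mod_cast hr
    have hUL : 0 < (U - L)^2 := pow_pos (sub_pos.mpr hLU) 2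
    exact mul_pos hlam (div_pos (mul_pos hrpos hUL) two_pos)
  have hwbound : ∀ w : Fin (p+1) → ℝ, w j.succ = 1 → c ≤ w ⬝ᵥ A *ᵥ w := by
    intro w hw
    rw [quadform_eq z D hsum0 hSDR w]
    set u : Fin p → ℝ := fun j' : Fin p => D j' * w j'.succ with hu
    have h1 : lam * (u ⬝ᵥ u) ≤ u ⬝ᵥ sCorr z *ᵥ u :=
      rayleigh_lower hR.1 hlamle u
    have h2 : u j * u j ≤ u ⬝ᵥ u := by
      rw [dotProduct]
      exact Finset.single_le_sum (f := fun j' => u j' * u j')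
        (fun i _ => mul_self_nonneg _) (Finset.mem_univ j)
    have h3 : u j * u j = ((k:ℝ)-1) * sVar z j := by
      have : u j = D j := by rw [hu]; simp [hw]
      rw [this, ← sq, hDsq]
    have h4 : (r:ℝ) * (U - L)^2 / 2 ≤ ((k:ℝ)-1) * sVar z j := by
      rw [← hSvv]
      exact var_sum_lower r (fun i => z i j) (sMean z j) L U hLU hL hU
    have h5 : c ≤ lam * (u ⬝ᵥ u) := by
      rw [hc]
      apply mul_le_mul_of_nonneg_left _ hlam.le
      calc (r:ℝ) * (U - L)^2 / 2 ≤ ((k:ℝ)-1) * sVar z j := h4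
        _ = u j * u j := h3.symm
        _ ≤ u ⬝ᵥ u := h2
    have h6 : 0 ≤ (k:ℝ) * (w 0 + ∑ j', w j'.succ * sMean z j')^2 := by positivity
    linarith
  -- the key inverse entry bound
  have hAdet : IsUnit A.det := (Matrix.isUnit_iff_isUnit_det A).mp hApd.isUnit
  have hAinv : (A⁻¹).PosDef := hApd.inv
  set e : Fin (p+1) → ℝ := Pi.single j.succ 1 with he
  have hene : e ≠ 0 := by
    intro h0
    rw [he] at h0
    simpa using congr_fun h0 j.succ
  set q : ℝ := A⁻¹ j.succ j.succ with hq
  have hmve : A⁻¹ *ᵥ e = fun s => A⁻¹ s j.succ := by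
    funext s
    rw [he]
    simp [Matrix.mulVec_single]
  have hqpos : 0 < q := by
    have h1 := hAinv.dotProduct_mulVec_pos hene
    rw [star_trivial, single_dotProduct, hmve] at h1
    simpa using h1
  set w : Fin (p+1) → ℝ := q⁻¹ • (A⁻¹ *ᵥ e) with hw
  have hws : w j.succ = 1 := by
    rw [hw]
    simp only [Pi.smul_apply, smul_eq_mul, hmve]
    exact inv_mul_cancel₀ hqpos.ne'
  have hwAw : w ⬝ᵥ A *ᵥ w = q⁻¹ := by
    have hAe : A *ᵥ (A⁻¹ *ᵥ e) = e := by
      rw [Matrix.mulVec_mulVec, Matrix.mul_nonsing_inv A hAdet, Matrix.one_mulVec]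
    rw [hw, Matrix.mulVec_smul, hAe, smul_dotProduct, dotProduct_smul]
    rw [dotProduct_single]
    rw [hmve]
    simp only [smul_eq_mul, mul_one]
    rw [← hq]
    field_simp
  have hcq : c ≤ q⁻¹ := by
    rw [← hwAw]
    exact hwbound w hws
  have hqle : q ≤ 1 / c := by
    rw [le_div_iff₀ hcpos]
    calc q * c ≤ q * q⁻¹ := mul_le_mul_of_nonneg_left hcq hqpos.le
      _ = 1 := mul_inv_cancel₀ hqpos.ne'
  -- final arithmetic
  have hrhs : 4 * (p:ℝ) * σ2 / ((k : ℝ) * lam * (U - L) ^ 2) = σ2 * (1 / c) := by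
    have hkcast : (k:ℝ) = 2 * (p:ℝ) * (r:ℝ) := by
      rw [hkpr]; push_cast; ring
    have hppos : (0:ℝ) < (p:ℝ) := by exact_mod_cast hp
    have hrpos : (0:ℝ) < (r:ℝ) := by exact_mod_cast hr
    have hULpos : (0:ℝ) < (U - L)^2 := pow_pos (sub_pos.mpr hLU) 2
    rw [hc, hkcast]
    field_simp
    ring
  calc σ2 * q ≤ σ2 * (1 / c) := mul_le_mul_of_nonneg_left hqle hσ2.le
    _ = 4 * (p:ℝ) * σ2 / ((k : ℝ) * lam * (U - L) ^ 2) := hrhs.symm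
end

section
/- Under the same setup, if all subdata values of covariate j lie in [z_{(1)j}, z_{(n)j}] and λ_max(R) is the largest eigenvalue of the subdata sample correlation matrix, then V(β̂ⱼ) ≥ 4σ² / (k λ_max(R) (z_{(n)j} - z_{(1)j})²). -/
open Matrix

lemma inv_diag_ge {n : Type*} [Fintype n] [DecidableEq n] {A : Matrix n n ℝ} (hA : A.PosDef)
    (v : n → ℝ) (j : n) (hvj : v j = 1) :
    1 / (v ⬝ᵥ A *ᵥ v) ≤ A⁻¹ j j := by
  have hdet : IsUnit A.det := isUnit_iff_ne_zero.2 (ne_of_gt hA.det_pos)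
  have hAB : A * A⁻¹ = 1 := mul_nonsing_inv A hdet
  have hAT : Aᵀ = A := by
    have := hA.1
    rwa [Matrix.IsHermitian, conjTranspose_eq_transpose_of_trivial] at this
  set q : ℝ := v ⬝ᵥ A *ᵥ v with hq
  have hv0 : v ≠ 0 := fun h => by simp [h] at hvj
  have hqpos : 0 < q := by
    have := hA.dotProduct_mulVec_pos hv0
    simpa using this
  set u : n → ℝ := v - q • (A⁻¹ *ᵥ Pi.single j 1) with hu
  have hABe : A *ᵥ (A⁻¹ *ᵥ Pi.single j 1) = Pi.single j 1 := by
    rw [mulVec_mulVec, hAB, one_mulVec]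
  have hcross : (A⁻¹ *ᵥ Pi.single j 1) ⬝ᵥ (A *ᵥ v) = v j := by
    rw [dotProduct_mulVec, ← mulVec_transpose, hAT, hABe, single_dotProduct, one_mul]
  have hBe : (A⁻¹ *ᵥ Pi.single j 1) ⬝ᵥ Pi.single j 1 = A⁻¹ j j := by
    simp [mulVec_single, dotProduct_single]
  have h0 : 0 ≤ u ⬝ᵥ A *ᵥ u := by
    have := hA.posSemidef.dotProduct_mulVec_nonneg u
    simpa using this
  have hexp : u ⬝ᵥ A *ᵥ u = q - 2 * q + q ^ 2 * A⁻¹ j j := by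
    rw [hu, mulVec_sub, mulVec_smul, hABe, sub_dotProduct, dotProduct_sub, dotProduct_sub,
      smul_dotProduct, smul_dotProduct, dotProduct_smul, dotProduct_smul, hcross, hBe,
      dotProduct_single, hvj]
    simp only [smul_eq_mul, hq]
    ring
  rw [hexp] at h0
  rw [div_le_iff₀ hqpos]
  nlinarith [hqpos, h0]

lemma sum_eig {n : Type*} [Fintype n] [DecidableEq n] {A : Matrix n n ℝ} (hA : A.IsHermitian) :
    ∑ i, hA.eigenvalues i = A.trace := by
  conv_rhs => rw [hA.spectral_theorem]
  rw [Unitary.conjStarAlgAut_apply, trace_mul_cycle, Unitary.coe_star_mul_self, one_mul, trace_diagonal]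
  simp

lemma one_le_sup' {n : Type*} [Fintype n] [DecidableEq n] {A : Matrix n n ℝ}
    (hA : A.IsHermitian) (hd : ∀ i, A i i = 1) (j : n) :
    1 ≤ Finset.univ.sup' ⟨j, Finset.mem_univ j⟩ hA.eigenvalues := by
  have htr : A.trace = (Fintype.card n : ℝ) := by
    simp [Matrix.trace, Matrix.diag, hd]
  have hsum : ∑ i, hA.eigenvalues i = (Fintype.card n : ℝ) := (sum_eig hA).trans htr
  by_contra h
  push_neg at h
  have hlt : ∀ i ∈ Finset.univ,
      hA.eigenvalues i ≤ Finset.univ.sup' ⟨j, Finset.mem_univ j⟩ hA.eigenvalues :=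
    fun i _ => Finset.le_sup' _ (Finset.mem_univ i)
  have := Finset.sum_le_card_nsmul Finset.univ hA.eigenvalues _ hlt
  rw [hsum] at this
  have hcard : 0 < Fintype.card n := Fintype.card_pos_iff.2 ⟨j⟩
  rw [nsmul_eq_mul] at this
  simp only [Finset.card_univ] at this
  nlinarith [this, h, hcard, (by exact_mod_cast hcard : (0:ℝ) < Fintype.card n)]

lemma design_mulVec {k p : ℕ} (z : Fin k → Fin p → ℝ) (c : Fin (p+1) → ℝ) (i : Fin k) :
    (designX z *ᵥ c) i = c 0 + ∑ l, z i l * c l.succ := by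
  simp [mulVec, dotProduct, designX, Fin.sum_univ_succ]

lemma design_injective {k p : ℕ} (hk : 2 ≤ k) (z : Fin k → Fin p → ℝ)
    (hvar : ∀ l, 0 < sVar z l) (hR : (sCorr z).PosDef)
    (c : Fin (p+1) → ℝ) (hc : designX z *ᵥ c = 0) : c = 0 := by
  have hkpos : 0 < k := by omega
  have hk0 : (0:ℝ) < (k:ℝ) := by exact_mod_cast hkpos
  have hk1 : (0:ℝ) < (k:ℝ) - 1 := by
    have : (2:ℝ) ≤ (k:ℝ) := by exact_mod_cast hk
    linarith
  have h1 : ∀ i, c 0 + ∑ l, z i l * c l.succ = 0 := by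
    intro i
    have := congrFun hc i
    rwa [design_mulVec] at this
  have hs : (k:ℝ) * c 0 + ∑ l, (∑ i, z i l) * c l.succ = 0 := by
    have h2 : ∑ i, (c 0 + ∑ l, z i l * c l.succ) = 0 := by
      simp [h1]
    rw [Finset.sum_add_distrib, Finset.sum_const, Finset.card_univ, Fintype.card_fin,
      Finset.sum_comm] at h2
    simp only [nsmul_eq_mul] at h2
    rw [← h2]
    congr 1
    exact Finset.sum_congr rfl fun l _ => by rw [Finset.sum_mul]
  have hmean : ∑ l, sMean z l * c l.succ = - c 0 := by
    have : ∑ l, sMean z l * c l.succ = (∑ l, (∑ i, z i l) * c l.succ) / k := by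
      rw [Finset.sum_div]
      exact Finset.sum_congr rfl fun l _ => by rw [sMean, div_mul_eq_mul_div]
    rw [this]
    field_simp
    linarith [hs]
  have hcent : ∀ i, ∑ l, (z i l - sMean z l) * c l.succ = 0 := by
    intro i
    have : ∑ l, (z i l - sMean z l) * c l.succ
        = (∑ l, z i l * c l.succ) - ∑ l, sMean z l * c l.succ := by
      rw [← Finset.sum_sub_distrib]
      exact Finset.sum_congr rfl fun l _ => by ring
    rw [this, hmean]
    have := h1 i
    linarith
  set e : Fin p → ℝ := fun l => c l.succ * Real.sqrt (((k:ℝ)-1) * sVar z l) with he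
  have hquad : e ⬝ᵥ (sCorr z *ᵥ e) = 0 := by
    have hstep : e ⬝ᵥ (sCorr z *ᵥ e)
        = ∑ l₁, ∑ l₂, c l₁.succ * c l₂.succ *
            ∑ i, (z i l₁ - sMean z l₁) * (z i l₂ - sMean z l₂) := by
      simp only [dotProduct, mulVec, Finset.mul_sum]
      refine Finset.sum_congr rfl fun l₁ _ => Finset.sum_congr rfl fun l₂ _ => ?_
      rw [he, ← Finset.mul_sum]
      simp only [sCorr, Matrix.of_apply]
      rw [Real.sqrt_mul hk1.le, Real.sqrt_mul hk1.le, Real.sqrt_mul (hvar l₁).le]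
      have h₁ : Real.sqrt (sVar z l₁) ≠ 0 := ne_of_gt (Real.sqrt_pos.2 (hvar l₁))
      have h₂ : Real.sqrt (sVar z l₂) ≠ 0 := ne_of_gt (Real.sqrt_pos.2 (hvar l₂))
      have hst : Real.sqrt ((k:ℝ)-1) * Real.sqrt ((k:ℝ)-1) = (k:ℝ)-1 :=
        Real.mul_self_sqrt hk1.le
      field_simp
      linear_combination (c l₁.succ * c l₂.succ *
        (∑ i, (z i l₁ - sMean z l₁) * (z i l₂ - sMean z l₂))) * hst
    rw [hstep]
    have hswap : ∀ l₁ : Fin p, ∑ l₂, c l₁.succ * c l₂.succ *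
        ∑ i, (z i l₁ - sMean z l₁) * (z i l₂ - sMean z l₂) = 0 := by
      intro l₁
      have : ∀ l₂ : Fin p, c l₁.succ * c l₂.succ *
          ∑ i, (z i l₁ - sMean z l₁) * (z i l₂ - sMean z l₂)
          = ∑ i, (c l₁.succ * (z i l₁ - sMean z l₁)) * ((z i l₂ - sMean z l₂) * c l₂.succ) := by
        intro l₂
        rw [Finset.mul_sum]
        exact Finset.sum_congr rfl fun i _ => by ring
      simp only [this]
      rw [Finset.sum_comm]
      have : ∀ i : Fin k, ∑ l₂, (c l₁.succ * (z i l₁ - sMean z l₁)) *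
          ((z i l₂ - sMean z l₂) * c l₂.succ) = 0 := by
        intro i
        rw [← Finset.mul_sum, hcent i, mul_zero]
      simp [this]
    simp [hswap]
  have he0 : e = 0 := by
    by_contra hne
    have := hR.dotProduct_mulVec_pos hne
    rw [show star e = e from rfl] at this
    rw [hquad] at this
    exact lt_irrefl 0 this
  have hcsucc : ∀ l : Fin p, c l.succ = 0 := by
    intro l
    have h := congrFun he0 l
    rw [he] at h
    simp only [Pi.zero_apply] at h
    have hsq : Real.sqrt (((k:ℝ)-1) * sVar z l) ≠ 0 :=
      ne_of_gt (Real.sqrt_pos.2 (mul_pos hk1 (hvar l)))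
    exact (mul_eq_zero.1 h).resolve_right hsq
  have hc0 : c 0 = 0 := by
    have := h1 ⟨0, hkpos⟩
    simpa [hcsucc] using this
  funext j'
  exact Fin.cases hc0 hcsucc j'

lemma XtX_posDef {k p : ℕ} (hk : 2 ≤ k) (z : Fin k → Fin p → ℝ)
    (hvar : ∀ l, 0 < sVar z l) (hR : (sCorr z).PosDef) :
    ((designX z)ᵀ * designX z).PosDef := by
  refine PosDef.of_dotProduct_mulVec_pos (by have := isHermitian_conjTranspose_mul_self (designX z); rwa [conjTranspose_eq_transpose_of_trivial] at this) fun x hx => ?_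
  have hXx : designX z *ᵥ x ≠ 0 := fun h => hx (design_injective hk z hvar hR x h)
  have heq : star x ⬝ᵥ ((designX z)ᵀ * designX z) *ᵥ x
      = (designX z *ᵥ x) ⬝ᵥ (designX z *ᵥ x) := by
    rw [show star x = x from rfl, ← mulVec_mulVec, dotProduct_mulVec, vecMul_transpose]
  rw [heq]
  have : 0 ≤ (designX z *ᵥ x) ⬝ᵥ (designX z *ᵥ x) := by
    exact Finset.sum_nonneg fun i _ => mul_self_nonneg _
  rcases this.lt_or_eq with h | h
  · exact h
  · exact absurd (dotProduct_self_eq_zero.1 h.symm) hXx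

lemma sCorr_diag {k p : ℕ} (hk : 2 ≤ k) (z : Fin k → Fin p → ℝ)
    (hvar : ∀ l, 0 < sVar z l) (l : Fin p) : sCorr z l l = 1 := by
  have hk1 : (0:ℝ) < (k:ℝ) - 1 := by
    have : (2:ℝ) ≤ (k:ℝ) := by exact_mod_cast hk
    linarith
  have hnum : ∑ i, (z i l - sMean z l) * (z i l - sMean z l)
      = ((k:ℝ) - 1) * sVar z l := by
    rw [sVar, mul_div_cancel₀ _ (ne_of_gt hk1)]
    exact Finset.sum_congr rfl fun i _ => (sq (z i l - sMean z l)).symm ▸ by ring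
  rw [sCorr, Matrix.of_apply, hnum, Real.sqrt_mul_self (hvar l).le]
  exact div_self (ne_of_gt (mul_pos hk1 (hvar l)))

lemma centered_sum {k p : ℕ} (hk : 0 < k) (z : Fin k → Fin p → ℝ) (j : Fin p) :
    ∑ i, (z i j - sMean z j) = 0 := by
  have hk0 : ((k:ℝ)) ≠ 0 := by positivity
  rw [Finset.sum_sub_distrib, Finset.sum_const, Finset.card_univ, Fintype.card_fin,
    nsmul_eq_mul, sMean, mul_div_cancel₀ _ hk0, sub_self]

lemma centered_sq_sum_le {k p : ℕ} (hk : 0 < k) (z : Fin k → Fin p → ℝ) (j : Fin p)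
    {zmin zmax : ℝ} (hbound : ∀ i, z i j ∈ Set.Icc zmin zmax) :
    ∑ i, (z i j - sMean z j) ^ 2 ≤ (k:ℝ) * (zmax - zmin) ^ 2 / 4 := by
  set m := sMean z j with hm
  set c := (zmin + zmax) / 2 with hc
  have h0 : ∑ i, (z i j - m) = 0 := centered_sum hk z j
  have hexp : ∑ i, (z i j - c) ^ 2
      = ∑ i, (z i j - m) ^ 2 + (2 * (m - c)) * ∑ i, (z i j - m) + (k:ℝ) * (m - c) ^ 2 := by
    have h : ∑ i, (z i j - c) ^ 2
        = ∑ i, ((z i j - m) ^ 2 + 2 * (m - c) * (z i j - m) + (m - c) ^ 2) :=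
      Finset.sum_congr rfl fun i _ => by ring
    rw [h, Finset.sum_add_distrib, Finset.sum_add_distrib, Finset.sum_const, Finset.card_univ,
      Fintype.card_fin, nsmul_eq_mul, ← Finset.mul_sum]
  have hle : ∑ i, (z i j - m) ^ 2 ≤ ∑ i, (z i j - c) ^ 2 := by
    rw [hexp, h0]
    nlinarith [sq_nonneg (m - c), (by exact_mod_cast hk : (0:ℝ) < (k:ℝ))]
  have hterm : ∀ i : Fin k, (z i j - c) ^ 2 ≤ ((zmax - zmin) / 2) ^ 2 := by
    intro i
    obtain ⟨h1, h2⟩ := hbound i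
    exact sq_le_sq' (by rw [hc]; linarith) (by rw [hc]; linarith)
      (a := z i j - c) (b := (zmax - zmin)/2)
  calc ∑ i, (z i j - m) ^ 2 ≤ ∑ i, (z i j - c) ^ 2 := hle
    _ ≤ ∑ _i : Fin k, ((zmax - zmin)/2) ^ 2 := Finset.sum_le_sum fun i _ => hterm i
    _ = (k:ℝ) * (zmax - zmin) ^ 2 / 4 := by
        rw [Finset.sum_const, Finset.card_univ, Fintype.card_fin, nsmul_eq_mul]; ring

/-- IBOSS variance lower bound: if all subdata values of covariate `j` lie in
`[zmin, zmax]`, then the variance of the `j`-th slope estimator satisfies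
`V(β̂ⱼ) ≥ 4σ²/(k λ_max(R) (zmax - zmin)²)`. -/
theorem stmt_14 {k p : ℕ} (hk : 2 ≤ k) (z : Fin k → Fin p → ℝ) (j : Fin p)
    (zmin zmax : ℝ) (hminmax : zmin < zmax)
    (hbound : ∀ i, z i j ∈ Set.Icc zmin zmax)
    (hvar : ∀ l, 0 < sVar z l) (hR : (sCorr z).PosDef)
    (σ2 : ℝ) (hσ2 : 0 < σ2) :
    4 * σ2 /
        ((k : ℝ) * (Finset.univ.sup' ⟨j, Finset.mem_univ j⟩ hR.1.eigenvalues) *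
          (zmax - zmin) ^ 2) ≤
      σ2 * (((designX z)ᵀ * designX z)⁻¹ j.succ j.succ) := by
  have hkpos : 0 < k := by omega
  have hk0 : (0:ℝ) < (k:ℝ) := by exact_mod_cast hkpos
  have hk1 : (0:ℝ) < (k:ℝ) - 1 := by
    have : (2:ℝ) ≤ (k:ℝ) := by exact_mod_cast hk
    linarith
  have hΔ : 0 < zmax - zmin := sub_pos.2 hminmax
  have hA : ((designX z)ᵀ * designX z).PosDef := XtX_posDef hk z hvar hR
  set v : Fin (p+1) → ℝ := Fin.cons (-(sMean z j)) (Pi.single j 1) with hv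
  have hvj : v j.succ = 1 := by rw [hv, Fin.cons_succ]; exact Pi.single_eq_same j 1
  have hXv : designX z *ᵥ v = fun i => z i j - sMean z j := by
    funext i
    rw [design_mulVec, hv]
    simp [Fin.cons_zero, Fin.cons_succ, Pi.single_apply, mul_ite]
    ring
  have hqval : v ⬝ᵥ ((designX z)ᵀ * designX z) *ᵥ v = ∑ i, (z i j - sMean z j)^2 := by
    rw [← mulVec_mulVec, dotProduct_mulVec, vecMul_transpose, hXv]
    exact Finset.sum_congr rfl fun i _ => (sq (z i j - sMean z j)).symm ▸ by ring
  set q := ∑ i, (z i j - sMean z j)^2 with hqdef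
  have hqpos : 0 < q := by
    have h := hvar j
    rw [sVar] at h
    rcases div_pos_iff.1 h with ⟨h1, _⟩ | ⟨_, h2⟩
    · exact h1
    · linarith
  have hBjj : 1/q ≤ ((designX z)ᵀ * designX z)⁻¹ j.succ j.succ := by
    have := inv_diag_ge hA v j.succ hvj
    rwa [hqval] at this
  set lam := Finset.univ.sup' ⟨j, Finset.mem_univ j⟩ hR.1.eigenvalues with hlam
  have hl1 : 1 ≤ lam := one_le_sup' hR.1 (sCorr_diag hk z hvar) j
  have hub : q ≤ (k:ℝ) * lam * (zmax - zmin)^2 / 4 := by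
    have h1 : q ≤ (k:ℝ) * (zmax - zmin)^2 / 4 := centered_sq_sum_le hkpos z j hbound
    nlinarith [hl1, hΔ, hk0, sq_nonneg (zmax - zmin)]
  have hlampos : 0 < lam := lt_of_lt_of_le one_pos hl1
  have hDpos : 0 < (k:ℝ) * lam * (zmax - zmin)^2 :=
    mul_pos (mul_pos hk0 hlampos) (by positivity)
  calc 4 * σ2 / ((k:ℝ) * lam * (zmax - zmin)^2)
      = σ2 * (1 / ((k:ℝ) * lam * (zmax - zmin)^2 / 4)) := by
        rw [one_div_div]; ring
    _ ≤ σ2 * (1/q) :=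
        mul_le_mul_of_nonneg_left (one_div_le_one_div_of_le hqpos hub) hσ2.le
    _ ≤ σ2 * (((designX z)ᵀ * designX z)⁻¹ j.succ j.succ) :=
        mul_le_mul_of_nonneg_left hBjj hσ2.le
end
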